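/- In the regression model, the generative distribution-weighted predictor built from the induced density estimates coincides with the discriminative distribution-weighted predictor after a reparameterization of the mixture weights. Precisely: for any z ∈ Δ, defining z'_k = (z_k / Q̂(k)) / (Σ_{j=1}^p z_j / Q̂(j)) for all k ∈ [p], one has ĥ_z(x) = ĝ_{z'}(x) for every x ∈ X, where ĥ_z is the generative combination using the density estimates D̂_k(x) = Q̂(k|x) D(x) / Q̂(k). -/

import Mathlib

open scoped BigOperators

/-- In the regression model, the generative distribution-weighted predictor built
from the induced density estimates `D̂_k(x) = Q̂(k|x) D(x) / Q̂(k)` coincides with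
the discriminative distribution-weighted predictor after reparameterizing the
mixture weights (Proposition 1 of the paper, regression model). -/
theorem gmsa_eq_dmsa_regression {X : Type*} [Fintype X] {p : ℕ}
    (D : X → ℝ) (hDpos : ∀ x, 0 < D x) (hDsum : ∑ x, D x = 1)
    (h : Fin p → X → ℝ)
    (Qc : Fin p → X → ℝ) (hQc : ∀ k x, 0 < Qc k x)
    (Qk : Fin p → ℝ) (hQkdef : ∀ k, Qk k = ∑ x, Qc k x * D x)
    (hQkpos : ∀ k, 0 < Qk k)
    (Dhat : Fin p → X → ℝ) (hDhat : ∀ k x, Dhat k x = Qc k x * D x / Qk k)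
    (z : Fin p → ℝ) (hz : z ∈ stdSimplex ℝ (Fin p))
    (z' : Fin p → ℝ)
    (hz' : ∀ k, z' k = (z k / Qk k) / ∑ j, z j / Qk j) :
    ∀ x : X,
      (∑ k, (z k * Dhat k x / ∑ j, z j * Dhat j x) * h k x) =
        ∑ k, (z' k * Qc k x / ∑ j, z' j * Qc j x) * h k x := by
  intro x
  have hznn := hz.1
  have hzsum := hz.2
  set S := ∑ j, z j / Qk j with hSdef
  have hS : 0 < S := by
    obtain ⟨k, hk⟩ : ∃ k, 0 < z k := by
      by_contra hc
      push_neg at hc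
      have hzero : ∑ j, z j = 0 :=
        Finset.sum_eq_zero fun j _ => le_antisymm (hc j) (hznn j)
      rw [hzero] at hzsum
      norm_num at hzsum
    exact Finset.sum_pos' (fun j _ => div_nonneg (hznn j) (hQkpos j).le)
      ⟨k, Finset.mem_univ k, div_pos hk (hQkpos k)⟩
  have key : ∀ k, z k * Dhat k x = (z' k * Qc k x) * (S * D x) := by
    intro k
    rw [hDhat, hz']
    field_simp
  have hden : ∑ j, z j * Dhat j x = (∑ j, z' j * Qc j x) * (S * D x) := by
    rw [Finset.sum_mul]
    exact Finset.sum_congr rfl fun j _ => key j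
  have hc : S * D x ≠ 0 := ne_of_gt (mul_pos hS (hDpos x))
  refine Finset.sum_congr rfl fun k _ => ?_
  rw [key, hden, mul_div_mul_right _ _ hc]
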